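/- Let G be an abelian group and let H be a uniformly fully inert subgroup of G. Then the subgroup H ⊕ H (the set of pairs (h₁, h₂) with h₁, h₂ ∈ H) is a uniformly fully inert subgroup of G ⊕ G. -/

import Mathlib

/-- A subgroup is fully invariant if it is mapped into itself by every endomorphism. -/
def FullyInvariant {G : Type*} [AddCommGroup G] (F : AddSubgroup G) : Prop :=
  ∀ φ : G →+ G, F.map φ ≤ F

/-- A subgroup `S` is uniformly fully inert if there is a positive integer `m` such that
for every endomorphism `φ` the quotient `(φ(S) + S)/S` has at most `m` elements. -/
def UniformlyFullyInert {G : Type*} [AddCommGroup G] (S : AddSubgroup G) : Prop :=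
  ∃ m : ℕ, 0 < m ∧ ∀ φ : G →+ G,
    Finite (↥(S.map φ ⊔ S) ⧸ S.addSubgroupOf (S.map φ ⊔ S)) ∧
    Nat.card (↥(S.map φ ⊔ S) ⧸ S.addSubgroupOf (S.map φ ⊔ S)) ≤ m

/-- Two subgroups `B`, `C` are commensurable if `(B + C)/B` and `(B + C)/C` are finite. -/
def AddCommensurable {G : Type*} [AddCommGroup G] (B C : AddSubgroup G) : Prop :=
  Finite (↥(B ⊔ C) ⧸ B.addSubgroupOf (B ⊔ C)) ∧
  Finite (↥(B ⊔ C) ⧸ C.addSubgroupOf (B ⊔ C))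

open AddSubgroup

/-- The relative index as the cardinality of the quotient. -/
lemma relindex_eq_card_quot {G : Type*} [AddCommGroup G] (S T : AddSubgroup G) :
    S.relIndex T = Nat.card (↥T ⧸ S.addSubgroupOf T) := rfl

/-- relindex of the product subgroup is the product of relindexes. -/
lemma relindex_prod_prod {G G' : Type*} [AddCommGroup G] [AddCommGroup G'] (H P : AddSubgroup G)
    (K Q : AddSubgroup G') :
    (H.prod K).relIndex (P.prod Q) = H.relIndex P * K.relIndex Q := by
  have h1 : H.prod K = (H.comap (AddMonoidHom.fst G G')) ⊓ (K.comap (AddMonoidHom.snd G G')) := by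
    ext ⟨x, y⟩; simp [AddSubgroup.mem_prod]
  have h2 : (K.comap (AddMonoidHom.snd G G')) ⊓ (P.prod Q) = P.prod (Q ⊓ K) := by
    ext ⟨x, y⟩; simp [AddSubgroup.mem_prod]; tauto
  have h3 : (P.prod (Q ⊓ K)).map (AddMonoidHom.fst G G') = P := by
    ext x
    simp only [mem_map, AddSubgroup.mem_prod]
    constructor
    · rintro ⟨⟨a, b⟩, ⟨ha, _⟩, rfl⟩; exact ha
    · intro hx; exact ⟨(x, 0), ⟨hx, zero_mem _⟩, rfl⟩
  have h4 : (P.prod Q).map (AddMonoidHom.snd G G') = Q := by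
    ext y
    simp only [mem_map, AddSubgroup.mem_prod]
    constructor
    · rintro ⟨⟨a, b⟩, ⟨_, hb⟩, rfl⟩; exact hb
    · intro hy; exact ⟨(0, y), ⟨zero_mem _, hy⟩, rfl⟩
  rw [h1, ← relIndex_inf_mul_relIndex, h2, relIndex_comap, relIndex_comap, h3, h4]

/-- Two-endomorphism bound from the one-endomorphism bound. -/
lemma relindex_sup_sup {G : Type*} [AddCommGroup G] (H : AddSubgroup G) (m : ℕ)
    (hm : ∀ φ : G →+ G, H.relIndex (H.map φ ⊔ H) ≠ 0 ∧ H.relIndex (H.map φ ⊔ H) ≤ m)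
    (ψ χ : G →+ G) :
    H.relIndex (H.map ψ ⊔ H.map χ ⊔ H) ≠ 0 ∧ H.relIndex (H.map ψ ⊔ H.map χ ⊔ H) ≤ m * m := by
  set A := H.map ψ
  set B := H.map χ
  have hsup : A ⊔ B ⊔ H = A ⊔ (B ⊔ H) := sup_assoc ..
  have htower : H.relIndex (B ⊔ H) * (B ⊔ H).relIndex (A ⊔ (B ⊔ H)) =
      H.relIndex (A ⊔ (B ⊔ H)) :=
    relIndex_mul_relIndex _ _ _ le_sup_right le_sup_right
  have h1 := hm χ
  have h2 := hm ψ
  have e1 : (B ⊔ H).relIndex (A ⊔ (B ⊔ H)) = (B ⊔ H).relIndex A := relIndex_sup_right _ _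
  have e2 : H.relIndex (A ⊔ H) = H.relIndex A := relIndex_sup_right _ _
  have hdvd : (B ⊔ H).relIndex A ∣ H.relIndex A := relIndex_dvd_of_le_left _ le_sup_right
  have hA0 : H.relIndex A ≠ 0 := e2 ▸ h2.1
  have hAm : H.relIndex A ≤ m := e2 ▸ h2.2
  have hf2ne : (B ⊔ H).relIndex A ≠ 0 := fun h => hA0 (eq_zero_of_zero_dvd (h ▸ hdvd))
  have hf2le : (B ⊔ H).relIndex A ≤ m := le_trans (Nat.le_of_dvd (Nat.pos_of_ne_zero hA0) hdvd) hAm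
  rw [hsup, ← htower, e1]
  exact ⟨Nat.mul_ne_zero h1.1 hf2ne, Nat.mul_le_mul h1.2 hf2le⟩

/-- If `H` is uniformly fully inert in `G`, then `H ⊕ H` is uniformly fully inert
in `G ⊕ G`. -/
theorem uniformlyFullyInert_prod
    (G : Type*) [AddCommGroup G] (H : AddSubgroup G)
    (hH : UniformlyFullyInert H) :
    UniformlyFullyInert (H.prod H) := by
  obtain ⟨m, hm0, hm⟩ := hH
  have hrel : ∀ φ : G →+ G, H.relIndex (H.map φ ⊔ H) ≠ 0 ∧ H.relIndex (H.map φ ⊔ H) ≤ m := by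
    intro φ
    obtain ⟨hfin, hcard⟩ := hm φ
    rw [relindex_eq_card_quot]
    exact ⟨Nat.card_pos.ne', hcard⟩
  refine ⟨m * m * (m * m), by positivity, ?_⟩
  intro φ
  set φ11 := (AddMonoidHom.fst G G).comp (φ.comp (AddMonoidHom.inl G G)) with hφ11
  set φ12 := (AddMonoidHom.fst G G).comp (φ.comp (AddMonoidHom.inr G G)) with hφ12
  set φ21 := (AddMonoidHom.snd G G).comp (φ.comp (AddMonoidHom.inl G G)) with hφ21
  set φ22 := (AddMonoidHom.snd G G).comp (φ.comp (AddMonoidHom.inr G G)) with hφ22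
  set S := H.prod H with hS
  set P := H.map φ11 ⊔ H.map φ12 ⊔ H with hP
  set Q := H.map φ21 ⊔ H.map φ22 ⊔ H with hQ
  set K := P.prod Q with hK
  have hHP : H ≤ P := le_sup_right
  have hHQ : H ≤ Q := le_sup_right
  have hSK : S.map φ ⊔ S ≤ K := by
    apply sup_le
    · rintro _ ⟨⟨a, b⟩, ⟨ha, hb⟩, rfl⟩
      have hsplit : φ (a, b) = φ (a, 0) + φ (0, b) := by
        rw [← map_add]; norm_num
      constructor
      · show (φ (a, b)).1 ∈ P
        rw [hsplit]
        exact add_mem (mem_sup_left (mem_sup_left ⟨a, ha, rfl⟩))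
          (mem_sup_left (mem_sup_right ⟨b, hb, rfl⟩))
      · show (φ (a, b)).2 ∈ Q
        rw [hsplit]
        exact add_mem (mem_sup_left (mem_sup_left ⟨a, ha, rfl⟩))
          (mem_sup_left (mem_sup_right ⟨b, hb, rfl⟩))
    · rintro ⟨x, y⟩ ⟨hx, hy⟩
      exact ⟨hHP hx, hHQ hy⟩
  have hK0 : S.relIndex K ≠ 0 ∧ S.relIndex K ≤ m * m * (m * m) := by
    rw [hK, hS, relindex_prod_prod]
    obtain ⟨h1, h2⟩ := relindex_sup_sup H m hrel φ11 φ12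
    obtain ⟨h3, h4⟩ := relindex_sup_sup H m hrel φ21 φ22
    exact ⟨Nat.mul_ne_zero h1 h3, Nat.mul_le_mul h2 h4⟩
  have hdvd : S.relIndex (S.map φ ⊔ S) ∣ S.relIndex K :=
    ⟨_, (relIndex_mul_relIndex _ _ _ le_sup_right hSK).symm⟩
  have hne : S.relIndex (S.map φ ⊔ S) ≠ 0 :=
    fun h => hK0.1 (eq_zero_of_zero_dvd (h ▸ hdvd))
  have hle : S.relIndex (S.map φ ⊔ S) ≤ m * m * (m * m) :=
    le_trans (Nat.le_of_dvd (Nat.pos_of_ne_zero hK0.1) hdvd) hK0.2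
  rw [relindex_eq_card_quot] at hne hle
  exact ⟨Nat.finite_of_card_ne_zero hne, hle⟩
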